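/- arXiv:1705.06408 — 3 statements merged into one kernel-verified Lean document; each statement's English description precedes it below -/
import Mathlib

section
/- Let X ∈ {0,1}^d with exactly s nonzeros where s < d/4, and H the Householder reflection with normal v = (1/√d,…,1/√d). Then the regularity constant of HX equals c' = d/s - 4 + 4s/d, which is strictly less than d/s. -/
/-- Regularity constant `c(Y) = d‖Y²‖_∞ / ‖Y‖₂²` of a vector `Y ∈ ℝ^d`. -/
noncomputable def regConst (d : ℕ) (Y : Fin d → ℝ) : ℝ :=
  (d : ℝ) * (⨆ i, (Y i) ^ 2) / ∑ i, (Y i) ^ 2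

/-- If `X ∈ {0,1}^d` has exactly `s` nonzeros with `s < d/4`, then the regularity
constant of the Householder-transformed vector is `d/s - 4 + 4s/d < d/s`. -/
theorem householder_regConst_very_sparse (d s : ℕ) (hd : 0 < d) (hs1 : 1 ≤ s)
    (hsmall : (s : ℝ) < (d : ℝ) / 4)
    (X : Fin d → ℝ) (hX : ∀ i, X i = 0 ∨ X i = 1)
    (hs : (Finset.univ.filter fun i => X i = 1).card = s) :
    let v : Fin d → ℝ := fun _ => 1 / Real.sqrt d
    let H : Matrix (Fin d) (Fin d) ℝ := 1 - (2 : ℝ) • Matrix.vecMulVec v v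
    regConst d (H.mulVec X) = (d : ℝ) / s - 4 + 4 * s / d ∧
    (d : ℝ) / s - 4 + 4 * s / d < (d : ℝ) / s := by
  intro v H
  have hd' : (0:ℝ) < d := by exact_mod_cast hd
  have hs' : (0:ℝ) < s := by exact_mod_cast hs1
  have hsd : 4 * (s:ℝ) < d := by linarith
  have hsqrt : Real.sqrt d * Real.sqrt d = d := Real.mul_self_sqrt hd'.le
  -- sum of X
  have hsum : ∑ j, X j = (s:ℝ) := by
    rw [← Finset.sum_filter_add_sum_filter_not Finset.univ (fun i => X i = 1)]
    have h1 : ∑ j ∈ Finset.univ.filter (fun i => X i = 1), X j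
        = ∑ j ∈ Finset.univ.filter (fun i => X i = 1), (1:ℝ) := by
      apply Finset.sum_congr rfl
      intro j hj
      exact (Finset.mem_filter.mp hj).2
    have h2 : ∑ j ∈ Finset.univ.filter (fun i => ¬ X i = 1), X j = 0 := by
      apply Finset.sum_eq_zero
      intro j hj
      rcases hX j with h | h
      · exact h
      · exact absurd h (Finset.mem_filter.mp hj).2
    rw [h1, h2, Finset.sum_const, nsmul_eq_mul, mul_one, hs, add_zero]
  have hY : ∀ i, H.mulVec X i = X i - 2 * s / d := by
    intro i
    simp only [H, v, Matrix.mulVec, dotProduct, Matrix.sub_apply,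
      Matrix.smul_apply, Matrix.one_apply, Matrix.vecMulVec_apply, smul_eq_mul]
    have : ∀ j, ((if i = j then (1:ℝ) else 0) - 2 * (1 / Real.sqrt d * (1 / Real.sqrt d))) * X j
        = (if i = j then (1:ℝ) else 0) * X j - (2/d) * X j := by
      intro j
      have : (1 / Real.sqrt d * (1 / Real.sqrt d)) = 1 / d := by
        field_simp
        rw [Real.sq_sqrt hd'.le]
      rw [this]; ring
    rw [Finset.sum_congr rfl (fun j _ => this j), Finset.sum_sub_distrib,
      ← Finset.mul_sum, hsum]
    simp [Finset.sum_ite_eq]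
    ring
  -- squares
  have hXsq : ∀ i, X i ^ 2 = X i := by
    intro i; rcases hX i with h | h <;> simp [h]
  have hsumsq : ∑ i, (H.mulVec X i) ^ 2 = (s:ℝ) := by
    have : ∀ i, (H.mulVec X i) ^ 2 = X i - (4*s/d) * X i + (2*s/d)^2 := by
      intro i
      rw [hY i, sub_sq, hXsq i]
      ring
    rw [Finset.sum_congr rfl (fun i _ => this i)]
    rw [Finset.sum_add_distrib, Finset.sum_sub_distrib, ← Finset.mul_sum, hsum,
      Finset.sum_const, nsmul_eq_mul, Finset.card_univ, Fintype.card_fin]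
    field_simp
    ring
  -- sup
  have h2sd : 2 * (s:ℝ) / d < 1 / 2 := by
    rw [div_lt_div_iff₀ hd' (by norm_num)]; linarith
  have h2sd0 : 0 ≤ 2 * (s:ℝ) / d := by positivity
  have hbound : ∀ i, (H.mulVec X i) ^ 2 ≤ (1 - 2*s/d)^2 := by
    intro i
    rw [hY i]
    rcases hX i with h | h
    · rw [h]
      rw [zero_sub, neg_sq]
      apply pow_le_pow_left₀ h2sd0 (by linarith) 2
    · rw [h]
  have hex : ∃ i, X i = 1 := by
    have : 0 < (Finset.univ.filter fun i => X i = 1).card := by omega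
    obtain ⟨i, hi⟩ := Finset.card_pos.mp this
    exact ⟨i, (Finset.mem_filter.mp hi).2⟩
  obtain ⟨i0, hi0⟩ := hex
  haveI : Nonempty (Fin d) := ⟨⟨0, hd⟩⟩
  have hsup : (⨆ i, (H.mulVec X i) ^ 2) = (1 - 2*s/d)^2 := by
    apply le_antisymm
    · exact ciSup_le hbound
    · have := le_ciSup (f := fun i => (H.mulVec X i)^2) (Finite.bddAbove_range _) i0
      rw [hY i0, hi0] at this
      exact this
  constructor
  · unfold regConst
    rw [hsup, hsumsq]
    field_simp
    ring
  · have : 4 * (s:ℝ) / d < 4 := by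
      rw [div_lt_iff₀ hd']; linarith
    linarith
end

section
/- Let X ∈ {0,1}^d with exactly s nonzeros where d/4 ≤ s < d/2, and H the Householder reflection with normal v = (1/√d,…,1/√d). Then the regularity constant of HX equals c' = 4s/d < d/s. -/
/-- If `X ∈ {0,1}^d` has exactly `s` nonzeros with `d/4 ≤ s < d/2`, then the
regularity constant of the Householder-transformed vector is `4s/d < d/s`. -/
theorem householder_regConst_moderate_sparse (d s : ℕ) (hd : 0 < d) (hs1 : 1 ≤ s)
    (hlow : (d : ℝ) / 4 ≤ (s : ℝ)) (hhigh : (s : ℝ) < (d : ℝ) / 2)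
    (X : Fin d → ℝ) (hX : ∀ i, X i = 0 ∨ X i = 1)
    (hs : (Finset.univ.filter fun i => X i = 1).card = s) :
    let v : Fin d → ℝ := fun _ => 1 / Real.sqrt d
    let H : Matrix (Fin d) (Fin d) ℝ := 1 - (2 : ℝ) • Matrix.vecMulVec v v
    regConst d (H.mulVec X) = 4 * s / d ∧ 4 * (s : ℝ) / d < (d : ℝ) / s := by
  intro v H
  have hdR : (0:ℝ) < d := by exact_mod_cast hd
  have hsR : (0:ℝ) < s := by exact_mod_cast hs1
  have hsd : s < d := by
    have : (s:ℝ) < d := by linarith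
    exact_mod_cast this
  -- sum of X = s
  have hXsum : ∑ j, X j = (s : ℝ) := by
    have : ∀ j, X j = if X j = 1 then (1:ℝ) else 0 := by
      intro j; rcases hX j with h | h <;> simp [h]
    rw [Finset.sum_congr rfl fun j _ => this j]
    rw [Finset.sum_boole, hs]
  have hsqrt : Real.sqrt d * Real.sqrt d = d := Real.mul_self_sqrt hdR.le
  -- entries of H.mulVec X
  have hentry : ∀ i, (H.mulVec X) i = X i - 2 * s / d := by
    intro i
    simp only [H, Matrix.sub_mulVec, Matrix.one_mulVec, Matrix.smul_mulVec,
      Pi.sub_apply, Pi.smul_apply, smul_eq_mul]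
    have : (Matrix.vecMulVec v v).mulVec X i = s / d := by
      simp only [Matrix.mulVec, dotProduct, Matrix.vecMulVec_apply, v]
      rw [Finset.sum_congr rfl fun j _ => show 1 / Real.sqrt d * (1 / Real.sqrt d) * X j
            = (1/(d:ℝ)) * X j by rw [div_mul_div_comm, one_mul, hsqrt]]
      rw [← Finset.mul_sum, hXsum]; ring
    rw [this]; ring
  set c : ℝ := 2 * s / d with hc
  have hc2 : (1 - c)^2 ≤ c^2 := by
    have h1 : 1/2 ≤ c := by
      rw [hc, le_div_iff₀ hdR]; linarith
    have h2 : c < 1 := by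
      rw [hc, div_lt_one hdR]; linarith
    nlinarith
  -- sup = c^2
  haveI : Nonempty (Fin d) := ⟨⟨0, hd⟩⟩
  have hsup : (⨆ i, ((H.mulVec X) i)^2) = c^2 := by
    apply le_antisymm
    · apply ciSup_le
      intro i
      rw [hentry i]
      rcases hX i with h | h <;> rw [h]
      · simpa using le_refl (c^2)
      · simpa using hc2
    · -- exists i with X i = 0
      obtain ⟨i, hXi⟩ : ∃ i, X i = 0 := by
        by_contra h
        push_neg at h
        have h1 : ∀ i, X i = 1 := fun i => (hX i).resolve_left (h i)
        have : (Finset.univ.filter fun i => X i = 1) = Finset.univ := by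
          apply Finset.filter_true_of_mem; intro i _; exact h1 i
        rw [this, Finset.card_univ, Fintype.card_fin] at hs
        omega
      have := le_ciSup (Finite.bddAbove_range fun i => ((H.mulVec X) i)^2) i
      rw [hentry i, hXi] at this
      simpa using this
  -- sum of squares = s
  have hsumsq : ∑ i, ((H.mulVec X) i)^2 = (s : ℝ) := by
    have hXsq : ∑ j, (X j)^2 = (s:ℝ) := by
      rw [Finset.sum_congr rfl fun j _ => show (X j)^2 = X j by
        rcases hX j with h | h <;> simp [h]]
      exact hXsum
    calc ∑ i, ((H.mulVec X) i)^2 = ∑ i, ((X i)^2 - 2*c*(X i) + c^2) := by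
          apply Finset.sum_congr rfl
          intro i _
          rw [hentry i]; ring
      _ = (s:ℝ) := by
          rw [Finset.sum_add_distrib, Finset.sum_sub_distrib, hXsq,
            ← Finset.mul_sum, hXsum, Finset.sum_const, Finset.card_univ,
            Fintype.card_fin, nsmul_eq_mul, hc]
          field_simp
          ring
  constructor
  · rw [regConst, hsup, hsumsq, hc]
    field_simp
    ring
  · rw [div_lt_div_iff₀ hdR hsR]
    nlinarith
end

section
/- (Basic Bound, single-vector version) Let X ∈ ℝ^d with ‖X‖₂ = 1 and ‖X²‖_∞ ≤ c/d for some c ∈ [1,d]. Let P be a uniformly random coordinate projection retaining k of d coordinates. Then for any ε > 0, Pr{ |(d/k)‖PX‖₂² − 1| ≥ ε } ≤ 2·exp(−2kε²/c²). -/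
open Finset

lemma tangent_pow (k : ℕ) {x a : ℝ} (hx : 0 ≤ x) (ha : 0 ≤ a) :
    a ^ k + k * a ^ (k - 1) * (x - a) ≤ x ^ k := by
  rcases Nat.eq_zero_or_pos k with rfl | hk
  · simp
  have hgeom : (∑ i ∈ Finset.range k, x ^ i * a ^ (k - 1 - i)) * (x - a) = x ^ k - a ^ k :=
    geom_sum₂_mul x a k
  rcases le_total a x with hax | hax
  · have hterm : ∀ i ∈ Finset.range k, a ^ (k-1) ≤ x ^ i * a ^ (k - 1 - i) := by
      intro i hi
      rw [Finset.mem_range] at hi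
      calc a ^ (k-1) = a ^ i * a ^ (k-1-i) := by rw [← pow_add]; congr 1; omega
        _ ≤ x ^ i * a ^ (k-1-i) :=
            mul_le_mul_of_nonneg_right (pow_le_pow_left₀ ha hax i) (pow_nonneg ha _)
    have hsum : (k : ℝ) * a ^ (k-1) ≤ ∑ i ∈ Finset.range k, x ^ i * a ^ (k - 1 - i) := by
      calc (k : ℝ) * a ^ (k-1) = ∑ _i ∈ Finset.range k, a ^ (k-1) := by
            simp [Finset.sum_const, mul_comm]
        _ ≤ _ := Finset.sum_le_sum hterm
    nlinarith [mul_le_mul_of_nonneg_right hsum (sub_nonneg.2 hax)]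
  · have hterm : ∀ i ∈ Finset.range k, x ^ i * a ^ (k - 1 - i) ≤ a ^ (k-1) := by
      intro i hi
      rw [Finset.mem_range] at hi
      calc x ^ i * a ^ (k-1-i) ≤ a ^ i * a ^ (k-1-i) :=
            mul_le_mul_of_nonneg_right (pow_le_pow_left₀ hx hax i) (pow_nonneg ha _)
        _ = a ^ (k-1) := by rw [← pow_add]; congr 1; omega
    have hsum : (∑ i ∈ Finset.range k, x ^ i * a ^ (k - 1 - i)) ≤ (k : ℝ) * a ^ (k-1) := by
      calc (∑ i ∈ Finset.range k, x ^ i * a ^ (k - 1 - i))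
          ≤ ∑ _i ∈ Finset.range k, a ^ (k-1) := Finset.sum_le_sum hterm
        _ = (k : ℝ) * a ^ (k-1) := by simp [Finset.sum_const, mul_comm]
    nlinarith [mul_le_mul_of_nonpos_right hsum (sub_nonpos.2 hax)]

lemma maclaurin_lite {ι : Type*} [DecidableEq ι] (s : Finset ι) (y : ι → ℝ)
    (hy : ∀ i ∈ s, 0 ≤ y i) (k : ℕ) :
    ∑ T ∈ s.powersetCard k, ∏ i ∈ T, y i
      ≤ (s.card.choose k : ℝ) * ((∑ i ∈ s, y i) / s.card) ^ k := by
  induction s using Finset.cons_induction generalizing k with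
  | empty =>
    rcases Nat.eq_zero_or_pos k with rfl | hk
    · simp
    · rw [Finset.powersetCard_eq_empty.2 (by simpa using hk)]
      simp [Nat.choose_eq_zero_of_lt hk]
  | cons a s ha ih =>
    simp only [Finset.cons_eq_insert] at hy ⊢
    rcases Nat.eq_zero_or_pos k with rfl | hk
    · simp
    obtain ⟨m, rfl⟩ : ∃ m, k = m + 1 := ⟨k - 1, by omega⟩
    have hys : ∀ i ∈ s, 0 ≤ y i := fun i hi => hy i (Finset.mem_insert_of_mem hi)
    have hta : 0 ≤ y a := hy a (Finset.mem_insert_self a s)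
    rw [Finset.powersetCard_succ_insert ha]
    have hdisj : Disjoint (s.powersetCard (m+1)) ((s.powersetCard m).image (insert a)) := by
      rw [Finset.disjoint_left]
      intro T hT hT'
      obtain ⟨U, hU, rfl⟩ := Finset.mem_image.1 hT'
      have : insert a U ⊆ s := (Finset.mem_powersetCard.1 hT).1
      exact ha (this (Finset.mem_insert_self a U))
    rw [Finset.sum_union hdisj]
    have himg : ∑ T ∈ (s.powersetCard m).image (insert a), ∏ i ∈ T, y i
        = y a * ∑ T ∈ s.powersetCard m, ∏ i ∈ T, y i := by
      rw [Finset.sum_image, Finset.mul_sum]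
      · apply Finset.sum_congr rfl
        intro T hT
        have haT : a ∉ T := fun h => ha ((Finset.mem_powersetCard.1 hT).1 h)
        rw [Finset.prod_insert haT]
      · intro T hT U hU hinj
        have haT : a ∉ T := fun h => ha ((Finset.mem_powersetCard.1 hT).1 h)
        have haU : a ∉ U := fun h => ha ((Finset.mem_powersetCard.1 hU).1 h)
        have := congrArg (Finset.erase · a) hinj
        simpa [Finset.erase_insert haT, Finset.erase_insert haU] using this
    rw [himg, Finset.sum_insert ha, Finset.card_insert_of_notMem ha]
    push_cast
    set n := s.card with hn
    set S := ∑ i ∈ s, y i with hS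
    set t := y a with ht
    have hS0 : 0 ≤ S := Finset.sum_nonneg hys
    set mb : ℝ := S / n with hmb
    set M : ℝ := (t + S) / (n + 1) with hM
    have hmb0 : 0 ≤ mb := div_nonneg hS0 (Nat.cast_nonneg n)
    have hM0 : 0 ≤ M := div_nonneg (by linarith) (by positivity)
    have hSnm : S = n * mb := by
      rcases Nat.eq_zero_or_pos n with h0 | h0
      · have : s = ∅ := Finset.card_eq_zero.1 h0
        simp [hmb, h0, this] at hS ⊢
        simp [hS, this]
      · rw [hmb]; field_simp
    have hMm : (n + 1 : ℝ) * (M - mb) = t - mb := by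
      rw [hM]; field_simp; linarith [hSnm]
    have h1 := ih hys (m+1)
    have h2 := ih hys m
    set A : ℝ := (n.choose (m+1) : ℝ) with hA
    set B : ℝ := (n.choose m : ℝ) with hB
    set C' : ℝ := ((n+1).choose (m+1) : ℝ) with hC
    have hAB : C' = A + B := by
      rw [hC, Nat.choose_succ_succ']; push_cast; ring
    have hBC : (n + 1 : ℝ) * B = C' * (m + 1) := by
      rw [hB, hC]
      rw [← Nat.cast_succ, ← Nat.cast_succ, ← Nat.cast_mul, ← Nat.cast_mul,
        Nat.add_one_mul_choose_eq]
    have hC0 : 0 ≤ C' := Nat.cast_nonneg _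
    have htan := tangent_pow (m+1) hM0 hmb0
    simp only [Nat.add_sub_cancel] at htan
    have hq0 : (0:ℝ) ≤ mb ^ m := pow_nonneg hmb0 m
    have hB0 : 0 ≤ B := Nat.cast_nonneg _
    push_cast at htan
    calc (∑ T ∈ powersetCard (m + 1) s, ∏ i ∈ T, y i) + t * ∑ T ∈ powersetCard m s, ∏ i ∈ T, y i
        ≤ A * mb ^ (m+1) + t * (B * mb ^ m) :=
          add_le_add h1 (mul_le_mul_of_nonneg_left h2 hta)
      _ = C' * (mb ^ (m+1) + ((m:ℝ) + 1) * mb ^ m * (M - mb)) := by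
          linear_combination (-(mb^m*mb))*hAB + (mb^m*(M-mb))*hBC + (-(B*mb^m))*hMm
      _ ≤ C' * M ^ (m+1) := mul_le_mul_of_nonneg_left htan hC0
      _ = C' * ((t + S) / ((n:ℝ)+1)) ^ (m+1) := by rw [hM]

lemma logistic_bound {p : ℝ} (hp0 : 0 ≤ p) (hp1 : p ≤ 1) (h : ℝ) :
    1 - p + p * Real.exp h ≤ Real.exp (p * h + h ^ 2 / 8) := by
  set g : ℝ → ℝ := fun x => 1 - p + p * Real.exp x with hg
  have hgpos : ∀ x, 0 < g x := by
    intro x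
    have := Real.exp_pos x
    rcases eq_or_lt_of_le hp0 with h0 | h0
    · simp [hg, ← h0]
    · have : 0 < p * Real.exp x := mul_pos h0 this
      simp only [hg]; linarith
  set f : ℝ → ℝ := fun x => p * x + x ^ 2 / 8 - Real.log (g x) with hf
  set φ : ℝ → ℝ := fun x => p + x / 4 - p * Real.exp x / g x with hφ
  have hgd : ∀ x, HasDerivAt g (p * Real.exp x) x := by
    intro x
    exact ((Real.hasDerivAt_exp x).const_mul p).const_add (1 - p)
  have hfd : ∀ x, HasDerivAt f (φ x) x := by
    intro x
    have h1 : HasDerivAt (fun x : ℝ => p * x) p x := by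
      simpa using (hasDerivAt_id x).const_mul p
    have h2 : HasDerivAt (fun x : ℝ => x ^ 2 / 8) (x / 4) x := by
      have := (hasDerivAt_pow 2 x).div_const 8
      simpa using this.congr_deriv (by ring)
    have h3 : HasDerivAt (fun x => Real.log (g x)) (p * Real.exp x / g x) x :=
      (hgd x).log (ne_of_gt (hgpos x))
    exact (h1.add h2).sub h3
  have hφd : ∀ x, HasDerivAt φ (1 / 4 - p * Real.exp x * (1 - p) / (g x) ^ 2) x := by
    intro x
    have h1 : HasDerivAt (fun x : ℝ => p + x / 4) (1 / 4) x := by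
      simpa using ((hasDerivAt_id x).div_const 4).const_add p
    have h2 : HasDerivAt (fun x => p * Real.exp x / g x)
        ((p * Real.exp x * g x - p * Real.exp x * (p * Real.exp x)) / (g x) ^ 2) x :=
      ((Real.hasDerivAt_exp x).const_mul p).div (hgd x) (ne_of_gt (hgpos x))
    have := h1.sub h2
    refine this.congr_deriv ?_
    simp only [g]
    field_simp
    ring
  have hφ'nonneg : ∀ x, 0 ≤ 1 / 4 - p * Real.exp x * (1 - p) / (g x) ^ 2 := by
    intro x
    rw [sub_nonneg, div_le_iff₀ (pow_pos (hgpos x) 2)]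
    have : (g x) ^ 2 - 4 * (p * Real.exp x * (1 - p)) = ((1 - p) - p * Real.exp x) ^ 2 := by
      simp only [hg]; ring
    nlinarith [sq_nonneg ((1 - p) - p * Real.exp x)]
  have hφmono : Monotone φ :=
    monotone_of_deriv_nonneg (fun x => (hφd x).differentiableAt)
      (fun x => by rw [(hφd x).deriv]; exact hφ'nonneg x)
  have hφ0 : φ 0 = 0 := by
    simp only [hφ, hg, Real.exp_zero, mul_one]
    field_simp
    ring
  have hf0 : f 0 = 0 := by
    simp only [hf, hg, Real.exp_zero, mul_one]
    norm_num
  have hfdiff : Differentiable ℝ f := fun x => (hfd x).differentiableAt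
  have key : 0 ≤ f h := by
    rcases le_total 0 h with hh | hh
    · have hmono : MonotoneOn f (Set.Ici 0) := by
        apply monotoneOn_of_deriv_nonneg (convex_Ici 0) hfdiff.continuous.continuousOn
          (hfdiff.differentiableOn)
        intro x hx
        rw [(hfd x).deriv, ← hφ0]
        exact hφmono (le_of_lt (by simpa using hx))
      have := hmono (Set.self_mem_Ici) (Set.mem_Ici.2 hh) hh
      rwa [hf0] at this
    · have hanti : AntitoneOn f (Set.Iic 0) := by
        apply antitoneOn_of_deriv_nonpos (convex_Iic 0) hfdiff.continuous.continuousOn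
          (hfdiff.differentiableOn)
        intro x hx
        rw [(hfd x).deriv, ← hφ0]
        exact hφmono (le_of_lt (by simpa using hx))
      have := hanti (Set.mem_Iic.2 hh) (Set.self_mem_Iic) hh
      rwa [hf0] at this
  have : Real.log (g h) ≤ p * h + h ^ 2 / 8 := by
    simp only [hf] at key; linarith
  calc g h = Real.exp (Real.log (g h)) := (Real.exp_log (hgpos h)).symm
    _ ≤ Real.exp (p * h + h ^ 2 / 8) := Real.exp_le_exp.2 this

lemma mgf_bound (d k : ℕ) (a : Fin d → ℝ) (R t : ℝ) (hR : 0 < R) (hd : 0 < d)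
    (ha0 : ∀ i, 0 ≤ a i) (haR : ∀ i, a i ≤ R) :
    ∑ S ∈ Finset.powersetCard k (Finset.univ : Finset (Fin d)),
        Real.exp (t * ∑ i ∈ S, a i)
      ≤ (d.choose k : ℝ) *
        Real.exp (k * (t * ((∑ i, a i) / d) + t ^ 2 * R ^ 2 / 8)) := by
  have hRne : R ≠ 0 := ne_of_gt hR
  set μ : ℝ := (∑ i, a i) / d with hμ
  have hsum0 : 0 ≤ ∑ i, a i := Finset.sum_nonneg fun i _ => ha0 i
  have hμ0 : 0 ≤ μ := div_nonneg hsum0 (Nat.cast_nonneg d)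
  have hsumR : ∑ i, a i ≤ d * R := by
    calc ∑ i, a i ≤ ∑ _i : Fin d, R := Finset.sum_le_sum fun i _ => haR i
      _ = d * R := by simp [Finset.sum_const, mul_comm]
  have hμR : μ ≤ R := by
    rw [hμ, div_le_iff₀ (by exact_mod_cast hd)]
    linarith
  set p : ℝ := μ / R with hp
  have hp0 : 0 ≤ p := div_nonneg hμ0 hR.le
  have hp1 : p ≤ 1 := by rw [hp, div_le_one hR]; exact hμR
  -- pointwise convexity bound
  have hpoint : ∀ i : Fin d,
      Real.exp (t * a i) ≤ 1 - a i / R + (a i / R) * Real.exp (t * R) := by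
    intro i
    have hθ0 : 0 ≤ a i / R := div_nonneg (ha0 i) hR.le
    have hθ1 : a i / R ≤ 1 := by rw [div_le_one hR]; exact haR i
    have := convexOn_exp.2 (Set.mem_univ (0:ℝ)) (Set.mem_univ (t*R))
      (by linarith : (0:ℝ) ≤ 1 - a i / R) hθ0 (by ring)
    simp only [smul_eq_mul, mul_zero, zero_add, Real.exp_zero, mul_one] at this
    have harg : a i / R * (t * R) = t * a i := by field_simp
    rw [harg] at this
    linarith
  -- mean of exponentials
  have hmean : (∑ i, Real.exp (t * a i)) / d ≤ Real.exp (t * μ + t ^ 2 * R ^ 2 / 8) := by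
    have hsum : ∑ i, Real.exp (t * a i)
        ≤ d * (1 - p + p * Real.exp (t * R)) := by
      calc ∑ i, Real.exp (t * a i)
          ≤ ∑ i, (1 - a i / R + (a i / R) * Real.exp (t * R)) :=
            Finset.sum_le_sum fun i _ => hpoint i
        _ = d * (1 - p + p * Real.exp (t * R)) := by
            rw [Finset.sum_add_distrib, Finset.sum_sub_distrib, ← Finset.sum_div,
              ← Finset.sum_mul, ← Finset.sum_div]
            have : (∑ i, a i) / R = d * p := by
              rw [hp, hμ]; field_simp
            simp only [Finset.sum_const, Finset.card_univ, Fintype.card_fin, nsmul_eq_mul,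
              mul_one, this]
            ring
    have hlog := logistic_bound hp0 hp1 (t * R)
    have harg : p * (t * R) + (t * R) ^ 2 / 8 = t * μ + t ^ 2 * R ^ 2 / 8 := by
      rw [hp]; field_simp
    rw [harg] at hlog
    rw [div_le_iff₀ (by exact_mod_cast hd)]
    calc ∑ i, Real.exp (t * a i) ≤ d * (1 - p + p * Real.exp (t * R)) := hsum
      _ ≤ d * Real.exp (t * μ + t ^ 2 * R ^ 2 / 8) := by
          apply mul_le_mul_of_nonneg_left hlog (Nat.cast_nonneg d)
      _ = Real.exp (t * μ + t ^ 2 * R ^ 2 / 8) * d := by ring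
  -- maclaurin
  have hmac := maclaurin_lite (Finset.univ : Finset (Fin d)) (fun i => Real.exp (t * a i))
    (fun i _ => (Real.exp_pos _).le) k
  simp only [Finset.card_univ, Fintype.card_fin] at hmac
  have hexp_prod : ∀ S ∈ Finset.powersetCard k (Finset.univ : Finset (Fin d)),
      Real.exp (t * ∑ i ∈ S, a i) = ∏ i ∈ S, Real.exp (t * a i) := by
    intro S _
    rw [← Real.exp_sum, Finset.mul_sum]
  calc ∑ S ∈ Finset.powersetCard k (Finset.univ : Finset (Fin d)),
        Real.exp (t * ∑ i ∈ S, a i)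
      = ∑ S ∈ Finset.powersetCard k (Finset.univ : Finset (Fin d)),
        ∏ i ∈ S, Real.exp (t * a i) := Finset.sum_congr rfl hexp_prod
    _ ≤ (d.choose k : ℝ) * ((∑ i, Real.exp (t * a i)) / d) ^ k := hmac
    _ ≤ (d.choose k : ℝ) * Real.exp (t * μ + t ^ 2 * R ^ 2 / 8) ^ k := by
        apply mul_le_mul_of_nonneg_left _ (Nat.cast_nonneg _)
        apply pow_le_pow_left₀ _ hmean
        exact div_nonneg (Finset.sum_nonneg fun i _ => (Real.exp_pos _).le) (Nat.cast_nonneg d)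
    _ = (d.choose k : ℝ) * Real.exp (k * (t * μ + t ^ 2 * R ^ 2 / 8)) := by
        rw [← Real.exp_nat_mul]

lemma chernoff_core (d k : ℕ) (a : Fin d → ℝ) (R t θ : ℝ) (hR : 0 < R) (hd : 0 < d)
    (ha0 : ∀ i, 0 ≤ a i) (haR : ∀ i, a i ≤ R)
    (P : Finset (Fin d) → Prop) [DecidablePred P]
    (hP : ∀ S, P S → θ ≤ t * ∑ i ∈ S, a i) :
    (((Finset.powersetCard k (Finset.univ : Finset (Fin d))).filter P).card : ℝ)
        * Real.exp θ
      ≤ (d.choose k : ℝ) *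
        Real.exp (k * (t * ((∑ i, a i) / d) + t ^ 2 * R ^ 2 / 8)) := by
  calc (((Finset.powersetCard k (Finset.univ : Finset (Fin d))).filter P).card : ℝ)
        * Real.exp θ
      = ∑ _S ∈ (Finset.powersetCard k (Finset.univ : Finset (Fin d))).filter P,
          Real.exp θ := by rw [Finset.sum_const, nsmul_eq_mul]
    _ ≤ ∑ S ∈ (Finset.powersetCard k (Finset.univ : Finset (Fin d))).filter P,
          Real.exp (t * ∑ i ∈ S, a i) :=
        Finset.sum_le_sum fun S hS =>
          Real.exp_le_exp.2 (hP S (Finset.mem_filter.1 hS).2)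
    _ ≤ ∑ S ∈ Finset.powersetCard k (Finset.univ : Finset (Fin d)),
          Real.exp (t * ∑ i ∈ S, a i) :=
        Finset.sum_le_sum_of_subset_of_nonneg (Finset.filter_subset _ _)
          (fun S _ _ => (Real.exp_pos _).le)
    _ ≤ _ := mgf_bound d k a R t hR hd ha0 haR

/-- Basic bound, single-vector version: if `X` is a unit vector with
`‖X²‖_∞ ≤ c/d` and `P` is a uniformly random projection onto `k` of `d`
coordinates, then `Pr{|(d/k)‖PX‖₂² − 1| ≥ ε} ≤ 2exp(−2kε²/c²)`. -/
theorem randomSubspace_basic_bound_single (d k : ℕ) (c ε : ℝ)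
    (hd : 0 < d) (hk0 : 0 < k) (hk : k ≤ d) (hc1 : 1 ≤ c) (hcd : c ≤ d)
    (X : Fin d → ℝ) (hXnorm : ∑ i, (X i) ^ 2 = 1)
    (hXreg : (⨆ i, (X i) ^ 2) ≤ c / d) (hε : 0 < ε) :
    ((((Finset.powersetCard k (Finset.univ : Finset (Fin d))).filter
        (fun S => ε ≤ |((d : ℝ) / k) * ∑ i ∈ S, (X i) ^ 2 - 1|)).card : ℝ)
        / (d.choose k : ℝ))
      ≤ 2 * Real.exp (-(2 * k * ε ^ 2 / c ^ 2)) := by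
  have hdR : (0:ℝ) < d := by exact_mod_cast hd
  have hkR : (0:ℝ) < k := by exact_mod_cast hk0
  have hc0 : (0:ℝ) < c := lt_of_lt_of_le one_pos hc1
  set a : Fin d → ℝ := fun i => X i ^ 2 with haa
  have ha0 : ∀ i, 0 ≤ a i := fun i => sq_nonneg _
  set R : ℝ := c / d with hRdef
  have hR : 0 < R := div_pos hc0 hdR
  have haR : ∀ i, a i ≤ R := fun i =>
    le_trans (le_ciSup (Set.Finite.bddAbove (Set.finite_range _)) i) hXreg
  have hμ : (∑ i, a i) / (d:ℝ) = 1 / d := by rw [haa, hXnorm]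
  have hC0 : (0:ℝ) < (d.choose k : ℝ) := by exact_mod_cast Nat.choose_pos hk
  set τ : ℝ := 4 * ε * d / c ^ 2 with hτdef
  have hτ0 : 0 < τ := by positivity
  set Pu : Finset (Fin d) → Prop := fun S => ε ≤ ((d : ℝ) / k) * (∑ i ∈ S, a i) - 1 with hPu
  set Pl : Finset (Fin d) → Prop :=
    fun S => ε ≤ -(((d : ℝ) / k) * (∑ i ∈ S, a i) - 1) with hPl
  have hcard : ((((Finset.powersetCard k (Finset.univ : Finset (Fin d))).filter
        (fun S => ε ≤ |((d : ℝ) / k) * ∑ i ∈ S, (X i) ^ 2 - 1|)).card : ℝ))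
      ≤ (((Finset.powersetCard k (Finset.univ : Finset (Fin d))).filter Pu).card : ℝ)
        + (((Finset.powersetCard k (Finset.univ : Finset (Fin d))).filter Pl).card : ℝ) := by
    have hsub : (Finset.powersetCard k (Finset.univ : Finset (Fin d))).filter
          (fun S => ε ≤ |((d : ℝ) / k) * ∑ i ∈ S, (X i) ^ 2 - 1|)
        ⊆ ((Finset.powersetCard k (Finset.univ : Finset (Fin d))).filter Pu)
          ∪ ((Finset.powersetCard k (Finset.univ : Finset (Fin d))).filter Pl) := by
      intro S hS
      rw [Finset.mem_filter] at hS
      rcases le_abs.1 hS.2 with h | h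
      · exact Finset.mem_union_left _ (Finset.mem_filter.2 ⟨hS.1, h⟩)
      · exact Finset.mem_union_right _ (Finset.mem_filter.2 ⟨hS.1, h⟩)
    calc _ ≤ ((((Finset.powersetCard k (Finset.univ : Finset (Fin d))).filter Pu)
          ∪ ((Finset.powersetCard k (Finset.univ : Finset (Fin d))).filter Pl)).card : ℝ) := by
          exact_mod_cast Finset.card_le_card hsub
      _ ≤ _ := by exact_mod_cast Finset.card_union_le _ _
  -- generic divide step
  have divide : ∀ (N θ t : ℝ),
      N * Real.exp θ ≤ (d.choose k : ℝ) *
        Real.exp ((k:ℝ) * (t * ((∑ i, a i) / d) + t ^ 2 * R ^ 2 / 8)) →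
      ((k:ℝ) * (t * (1/d) + t ^ 2 * R ^ 2 / 8) - θ = -(2 * k * ε ^ 2 / c ^ 2)) →
      N ≤ (d.choose k : ℝ) * Real.exp (-(2 * k * ε ^ 2 / c ^ 2)) := by
    intro N θ t hle hexp
    rw [hμ] at hle
    have h1 : N ≤ (d.choose k : ℝ) *
        Real.exp ((k:ℝ) * (t * (1/d) + t ^ 2 * R ^ 2 / 8)) / Real.exp θ :=
      (le_div_iff₀ (Real.exp_pos θ)).2 hle
    rwa [mul_div_assoc, ← Real.exp_sub, hexp] at h1
  -- upper tail
  have hup : (((Finset.powersetCard k (Finset.univ : Finset (Fin d))).filter Pu).card : ℝ)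
      ≤ (d.choose k : ℝ) * Real.exp (-(2 * k * ε ^ 2 / c ^ 2)) := by
    apply divide _ (τ * ((k:ℝ)/d * (1 + ε))) τ
    · apply chernoff_core d k a R τ _ hR hd ha0 haR
      intro S hS
      apply mul_le_mul_of_nonneg_left _ hτ0.le
      rw [hPu] at hS
      have h1 : 1 + ε ≤ (d:ℝ)/k * ∑ i ∈ S, a i := by linarith
      calc (k:ℝ)/d * (1 + ε) ≤ (k:ℝ)/d * ((d:ℝ)/k * ∑ i ∈ S, a i) :=
            mul_le_mul_of_nonneg_left h1 (by positivity)
        _ = ∑ i ∈ S, a i := by field_simp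
    · rw [hτdef, hRdef]
      field_simp
      ring
  -- lower tail
  have hlo : (((Finset.powersetCard k (Finset.univ : Finset (Fin d))).filter Pl).card : ℝ)
      ≤ (d.choose k : ℝ) * Real.exp (-(2 * k * ε ^ 2 / c ^ 2)) := by
    apply divide _ (-τ * ((k:ℝ)/d * (1 - ε))) (-τ)
    · apply chernoff_core d k a R (-τ) _ hR hd ha0 haR
      intro S hS
      rw [hPl] at hS
      have h1 : (d:ℝ)/k * ∑ i ∈ S, a i ≤ 1 - ε := by linarith
      have h2 : ∑ i ∈ S, a i ≤ (k:ℝ)/d * (1 - ε) := by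
        calc ∑ i ∈ S, a i = (k:ℝ)/d * ((d:ℝ)/k * ∑ i ∈ S, a i) := by field_simp
          _ ≤ (k:ℝ)/d * (1 - ε) := mul_le_mul_of_nonneg_left h1 (by positivity)
      have h3 := mul_le_mul_of_nonneg_left h2 hτ0.le
      have e1 : -τ * ((k:ℝ)/d * (1 - ε)) = -(τ * ((k:ℝ)/d * (1 - ε))) := by ring
      have e2 : -τ * ∑ i ∈ S, a i = -(τ * ∑ i ∈ S, a i) := by ring
      rw [e1, e2]
      linarith
    · rw [hτdef, hRdef]
      field_simp
      ring
  -- assemble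
  rw [div_le_iff₀ hC0]
  calc ((((Finset.powersetCard k (Finset.univ : Finset (Fin d))).filter
        (fun S => ε ≤ |((d : ℝ) / k) * ∑ i ∈ S, (X i) ^ 2 - 1|)).card : ℝ))
      ≤ _ + _ := hcard
    _ ≤ (d.choose k : ℝ) * Real.exp (-(2 * k * ε ^ 2 / c ^ 2))
        + (d.choose k : ℝ) * Real.exp (-(2 * k * ε ^ 2 / c ^ 2)) := add_le_add hup hlo
    _ = 2 * Real.exp (-(2 * k * ε ^ 2 / c ^ 2)) * (d.choose k : ℝ) := by ring
end
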